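/- arXiv:1411.4757 — 2 statements merged into one kernel-verified Lean document; each statement's English description precedes it below -/
import Mathlib

section
/- Let u : ℕ+ → ℕ be non-decreasing. The number of u-parking functions on n labeled elements, 𝔣(u;n), satisfies the recurrence 𝔣(u;n) = Σ_{j=1}^{n} (-1)^{j-1} · C(n,j) · u(n-j+1)^j · 𝔣(u; n-j), with 𝔣(u;0) = 1. -/
/-- `f : Fin n → ℕ+` is a `u`-parking function. -/
def IsUPark (n : ℕ) (u : ℕ → ℕ) (f : Fin n → ℕ+) : Prop :=
  ∀ k ∈ Finset.Icc 1 n,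
    k ≤ (Finset.univ.filter (fun i : Fin n => (f i : ℕ) ≤ u k)).card

/-- The number of `u`-parking functions on `n` labeled elements. -/
noncomputable def parkCount (u : ℕ → ℕ) (n : ℕ) : ℕ :=
  Nat.card {f : Fin n → ℕ+ // IsUPark n u f}

open Finset

lemma isUPark_le {n : ℕ} {u : ℕ → ℕ} {f : Fin n → ℕ+} (hf : IsUPark n u f) (i : Fin n) :
    (f i : ℕ) ≤ u n := by
  have hn : 1 ≤ n := i.pos
  have h := hf n (mem_Icc.mpr ⟨hn, le_refl n⟩)
  have hcard : (Finset.univ.filter (fun i : Fin n => (f i : ℕ) ≤ u n)).card = n := by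
    refine le_antisymm ?_ h
    simpa using Finset.card_filter_le Finset.univ (fun i : Fin n => (f i : ℕ) ≤ u n)
  have huniv : (Finset.univ.filter (fun i : Fin n => (f i : ℕ) ≤ u n)) = Finset.univ :=
    Finset.eq_univ_of_card _ (by simpa using hcard)
  have hi : i ∈ Finset.univ.filter (fun i : Fin n => (f i : ℕ) ≤ u n) := by
    rw [huniv]; exact Finset.mem_univ i
  exact (Finset.mem_filter.mp hi).2

lemma finite_pnat_le (x : ℕ) : Finite {v : ℕ+ // (v : ℕ) ≤ x} := by
  refine Finite.of_injective (fun v => (⟨(v.1 : ℕ), v.2⟩ : Set.Iic x)) ?_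
  intro a b hab
  ext
  simpa using congrArg Subtype.val hab

lemma finite_park (u : ℕ → ℕ) (n : ℕ) : Finite {f : Fin n → ℕ+ // IsUPark n u f} := by
  have : ∀ f : {f : Fin n → ℕ+ // IsUPark n u f}, ∀ i, (f.1 i : ℕ) ≤ u n :=
    fun f i => isUPark_le f.2 i
  have inst := finite_pnat_le (u n)
  refine Finite.of_injective
    (fun f => (fun i => (⟨f.1 i, this f i⟩ : {v : ℕ+ // (v : ℕ) ≤ u n}))) ?_
  intro a b hab
  ext i
  exact congrArg (fun g => ((g i : {v : ℕ+ // (v:ℕ) ≤ u n}) : ℕ+)) hab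

lemma natCard_pnat_le (x : ℕ) : Nat.card {v : ℕ+ // (v : ℕ) ≤ x} = x := by
  have e : {v : ℕ+ // (v : ℕ) ≤ x} ≃ {m : ℕ // m ∈ Finset.Icc 1 x} := by
    refine ⟨fun v => ⟨(v.1 : ℕ), Finset.mem_Icc.mpr ⟨v.1.one_le, v.2⟩⟩,
      fun m => ⟨⟨m.1, lt_of_lt_of_le one_pos (Finset.mem_Icc.mp m.2).1⟩, (Finset.mem_Icc.mp m.2).2⟩, ?_, ?_⟩
    · intro v; ext; rfl
    · intro m; ext; rfl
  rw [Nat.card_congr e, Nat.card_eq_fintype_card, Fintype.card_coe, Nat.card_Icc]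
  omega

lemma natCard_pnat_ioc (a x : ℕ) : Nat.card {v : ℕ+ // a < (v : ℕ) ∧ (v : ℕ) ≤ x} = x - a := by
  have e : {v : ℕ+ // a < (v : ℕ) ∧ (v : ℕ) ≤ x} ≃ {m : ℕ // m ∈ Finset.Ioc a x} := by
    refine ⟨fun v => ⟨(v.1 : ℕ), Finset.mem_Ioc.mpr v.2⟩,
      fun m => ⟨⟨m.1, lt_of_le_of_lt (Nat.zero_le a) (Finset.mem_Ioc.mp m.2).1⟩, Finset.mem_Ioc.mp m.2⟩, ?_, ?_⟩
    · intro v; ext; rfl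
    · intro m; ext; rfl
  rw [Nat.card_congr e, Nat.card_eq_fintype_card, Fintype.card_coe, Nat.card_Ioc]

lemma parkCount_zero (u : ℕ → ℕ) : parkCount u 0 = 1 := by
  have h : ∀ f : Fin 0 → ℕ+, IsUPark 0 u f := by
    intro f k hk
    simp at hk
  unfold parkCount
  have : Unique {f : Fin 0 → ℕ+ // IsUPark 0 u f} :=
    ⟨⟨⟨fun i => i.elim0, h _⟩⟩, fun f => Subtype.ext (funext fun i => i.elim0)⟩
  exact Nat.card_unique


section core
variable {n : ℕ} (u : ℕ → ℕ)

def goodUpTo (f : Fin n → ℕ+) (k : ℕ) : Prop :=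
  ∀ m ∈ Finset.Icc 1 k, m ≤ (Finset.univ.filter fun i : Fin n => (f i : ℕ) ≤ u m).card

instance (f : Fin n → ℕ+) : DecidablePred (goodUpTo u f) := by
  unfold goodUpTo; infer_instance

def jof (f : Fin n → ℕ+) : ℕ := Nat.findGreatest (goodUpTo u f) n

def Sof (f : Fin n → ℕ+) : Finset (Fin n) :=
  Finset.univ.filter fun i => (f i : ℕ) ≤ u (jof u f + 1)

variable {u}

lemma goodUpTo_zero (f : Fin n → ℕ+) : goodUpTo u f 0 := by
  intro m hm; simp at hm

lemma jof_le (f : Fin n → ℕ+) : jof u f ≤ n := Nat.findGreatest_le n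

lemma goodUpTo_jof (f : Fin n → ℕ+) : goodUpTo u f (jof u f) :=
  Nat.findGreatest_spec (Nat.zero_le n) (goodUpTo_zero f)

lemma card_Sof (hu : Monotone u) (f : Fin n → ℕ+) : (Sof u f).card = jof u f := by
  have hgood := goodUpTo_jof (u := u) f
  have hjle := jof_le (u := u) f
  set j := jof u f with hj
  have hlow : j ≤ (Sof u f).card := by
    rcases Nat.eq_zero_or_pos j with h | h
    · omega
    have h1 : j ≤ (Finset.univ.filter fun i : Fin n => (f i : ℕ) ≤ u j).card :=
      hgood j (mem_Icc.mpr ⟨h, le_refl _⟩)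
    have h2 : (Finset.univ.filter fun i : Fin n => (f i : ℕ) ≤ u j) ⊆ Sof u f := by
      intro i hi
      simp only [Sof, mem_filter, mem_univ, true_and] at hi ⊢
      exact le_trans hi (hu (Nat.le_succ j))
    exact le_trans h1 (Finset.card_le_card h2)
  have hhigh : (Sof u f).card ≤ j := by
    rcases lt_or_ge j n with h | h
    · have hbad : ¬ goodUpTo u f (j + 1) := by
        apply Nat.findGreatest_is_greatest _ (show j + 1 ≤ n by omega)
        show jof u f < j + 1
        omega
      by_contra hc
      apply hbad
      intro m hm
      rcases mem_Icc.mp hm with ⟨hm1, hm2⟩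
      rcases Nat.lt_or_ge m (j + 1) with hmj | hmj
      · exact hgood m (mem_Icc.mpr ⟨hm1, by omega⟩)
      · have : m = j + 1 := by omega
        subst this
        simp only [Sof] at hc
        rw [← hj] at hc
        omega
    · calc (Sof u f).card ≤ (Finset.univ : Finset (Fin n)).card := Finset.card_le_card (Finset.subset_univ _)
        _ = n := by simp
        _ ≤ j := by omega
  omega

lemma key_iff {x : ℕ} (hu : Monotone u) (hx : u (n + 1) ≤ x) (S : Finset (Fin n))
    (f : Fin n → ℕ+) :
    ((∀ i, (f i : ℕ) ≤ x) ∧ Sof u f = S) ↔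
      ((∀ k ∈ Finset.Icc 1 S.card, k ≤ (S.filter fun i => (f i : ℕ) ≤ u k).card) ∧
        ∀ i ∉ S, u (S.card + 1) < (f i : ℕ) ∧ (f i : ℕ) ≤ x) := by
  constructor
  · rintro ⟨hfx, rfl⟩
    have hcard := card_Sof hu f
    set j := jof u f with hj
    have hgood := goodUpTo_jof (u := u) f
    constructor
    · intro k hk
      rcases mem_Icc.mp hk with ⟨hk1, hk2⟩
      have hsub : (Finset.univ.filter fun i : Fin n => (f i : ℕ) ≤ u k) =
          (Sof u f).filter fun i => (f i : ℕ) ≤ u k := by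
        ext i
        simp only [Sof, mem_filter, mem_univ, true_and]
        refine ⟨fun h => ⟨le_trans h (hu (by omega)), h⟩, fun h => h.2⟩
      have := hgood k (mem_Icc.mpr ⟨hk1, by omega⟩)
      rw [hsub] at this
      exact this
    · intro i hi
      simp only [Sof, mem_filter, mem_univ, true_and, not_le] at hi
      rw [hcard]
      exact ⟨hi, hfx i⟩
  · rintro ⟨hp, hout⟩
    have hjn : S.card ≤ n := by
      calc S.card ≤ (Finset.univ : Finset (Fin n)).card := Finset.card_le_card (Finset.subset_univ _)
        _ = n := by simp
    set j := S.card with hj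
    have hinS : ∀ i ∈ S, (f i : ℕ) ≤ u j := by
      rcases Nat.eq_zero_or_pos j with h | h
      · intro i hi
        have : S = ∅ := Finset.card_eq_zero.mp (by omega)
        rw [this] at hi; simp at hi
      · intro i hi
        have h1 : j ≤ (S.filter fun i => (f i : ℕ) ≤ u j).card :=
          hp j (mem_Icc.mpr ⟨h, le_refl _⟩)
        have h2 : (S.filter fun i => (f i : ℕ) ≤ u j) = S :=
          Finset.eq_of_subset_of_card_le (Finset.filter_subset _ _) (by omega)
        rw [← h2] at hi
        exact (Finset.mem_filter.mp hi).2
    have hfx : ∀ i, (f i : ℕ) ≤ x := by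
      intro i
      by_cases hi : i ∈ S
      · exact le_trans (hinS i hi) (le_trans (hu (by omega)) hx)
      · exact (hout i hi).2
    have hSfix : (Finset.univ.filter fun i : Fin n => (f i : ℕ) ≤ u (j + 1)) = S := by
      ext i
      simp only [mem_filter, mem_univ, true_and]
      constructor
      · intro h
        by_contra hi
        exact absurd h (not_le.mpr (hout i hi).1)
      · intro hi
        exact le_trans (hinS i hi) (hu (Nat.le_succ j))
    have hgoodj : goodUpTo u f j := by
      intro m hm
      rcases mem_Icc.mp hm with ⟨hm1, hm2⟩
      have hsub : (Finset.univ.filter fun i : Fin n => (f i : ℕ) ≤ u m) =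
          S.filter fun i => (f i : ℕ) ≤ u m := by
        ext i
        simp only [mem_filter, mem_univ, true_and]
        constructor
        · intro h
          refine ⟨?_, h⟩
          by_contra hi
          exact absurd (le_trans h (hu (by omega))) (not_le.mpr (hout i hi).1)
        · exact fun h => h.2
      rw [hsub]
      exact hp m hm
    have hjof : jof u f = j := by
      refine le_antisymm ?_ (Nat.le_findGreatest hjn hgoodj)
      by_contra hc
      push_neg at hc
      have hg := goodUpTo_jof (u := u) f
      have := hg (j + 1) (mem_Icc.mpr ⟨by omega, by omega⟩)
      rw [hSfix] at this
      omega
    refine ⟨hfx, ?_⟩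
    simp only [Sof, hjof]
    exact hSfix
end core

section part3
open Finset
variable {n : ℕ} {u : ℕ → ℕ} {x : ℕ}

def ClassPred (u : ℕ → ℕ) (x : ℕ) {n : ℕ} (S : Finset (Fin n)) (f : Fin n → ℕ+) : Prop :=
  (∀ k ∈ Finset.Icc 1 S.card, k ≤ (S.filter fun i => (f i : ℕ) ≤ u k).card) ∧
    ∀ i ∉ S, u (S.card + 1) < (f i : ℕ) ∧ (f i : ℕ) ≤ x

lemma finite_pnat_ioc (a x : ℕ) : Finite {v : ℕ+ // a < (v : ℕ) ∧ (v : ℕ) ≤ x} := by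
  refine Finite.of_injective (fun v => (⟨(v.1 : ℕ), v.2.2⟩ : Set.Iic x)) ?_
  intro a b hab
  ext
  simpa using congrArg Subtype.val hab

lemma card_filter_subtype {α : Type*} [Fintype α] [DecidableEq α] (S : Finset α)
    (p : α → Prop) [DecidablePred p] :
    (Finset.univ.filter fun i : {a // a ∈ S} => p i.1).card = (S.filter p).card := by
  rw [← Fintype.card_subtype]
  rw [show (S.filter p).card = Fintype.card {a // a ∈ S.filter p} from (Fintype.card_coe _).symm]
  exact Fintype.card_congr
    ⟨fun i => ⟨i.1.1, Finset.mem_filter.mpr ⟨i.1.2, i.2⟩⟩,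
     fun a => ⟨⟨a.1, (Finset.mem_filter.mp a.2).1⟩, (Finset.mem_filter.mp a.2).2⟩,
     fun i => by ext; rfl, fun a => by ext; rfl⟩

lemma card_filter_equiv {α β : Type*} [Fintype α] [Fintype β] (e : α ≃ β)
    (p : β → Prop) [DecidablePred p] :
    (Finset.univ.filter fun a => p (e a)).card = (Finset.univ.filter p).card := by
  rw [← Fintype.card_subtype, ← Fintype.card_subtype]
  exact Fintype.card_congr (e.subtypeEquiv fun a => Iff.rfl)

noncomputable def classEquiv (u : ℕ → ℕ) (x : ℕ) (S : Finset (Fin n)) :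
    {f : Fin n → ℕ+ // ClassPred u x S f} ≃
      {g : Fin S.card → ℕ+ // IsUPark S.card u g} ×
        ({i : Fin n // i ∉ S} → {v : ℕ+ // u (S.card + 1) < (v : ℕ) ∧ (v : ℕ) ≤ x}) := by
  classical
  refine
    { toFun := fun f =>
        (⟨fun k => f.1 (S.equivFin.symm k).1, ?_⟩,
         fun i => ⟨f.1 i.1, (f.2.2 i.1 i.2).1, (f.2.2 i.1 i.2).2⟩)
      invFun := fun gh =>
        ⟨fun i => if hi : i ∈ S then gh.1.1 (S.equivFin ⟨i, hi⟩) else (gh.2 ⟨i, hi⟩).1, ?_⟩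
      left_inv := ?_
      right_inv := ?_ }
  · -- IsUPark for relabeled restriction
    intro k hk
    have h1 : (Finset.univ.filter fun a : Fin S.card =>
        ((f.1 (S.equivFin.symm a).1 : ℕ) ≤ u k)).card =
        (Finset.univ.filter fun i : {a // a ∈ S} => (f.1 i.1 : ℕ) ≤ u k).card :=
      card_filter_equiv S.equivFin.symm (fun i : {a // a ∈ S} => (f.1 i.1 : ℕ) ≤ u k)
    rw [h1, card_filter_subtype S (fun a => (f.1 a : ℕ) ≤ u k)]
    exact f.2.1 k hk
  · -- ClassPred for combined function
    rcases gh with ⟨g, h⟩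
    constructor
    · intro k hk
      have hcongr : (S.filter fun i =>
          ((if hi : i ∈ S then g.1 (S.equivFin ⟨i, hi⟩) else (h ⟨i, hi⟩).1 : ℕ+) : ℕ) ≤ u k) =
          S.filter fun i => ∀ hi : i ∈ S, ((g.1 (S.equivFin ⟨i, hi⟩) : ℕ+) : ℕ) ≤ u k := by
        apply Finset.filter_congr
        intro i hi
        rw [dif_pos hi]
        exact ⟨fun h _ => h, fun h => h hi⟩
      rw [hcongr, ← card_filter_subtype S
        (fun i => ∀ hi : i ∈ S, ((g.1 (S.equivFin ⟨i, hi⟩) : ℕ+) : ℕ) ≤ u k)]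
      have h2 : (Finset.univ.filter fun i : {a // a ∈ S} =>
          ∀ hi : i.1 ∈ S, ((g.1 (S.equivFin ⟨i.1, hi⟩) : ℕ+) : ℕ) ≤ u k) =
          Finset.univ.filter fun i : {a // a ∈ S} => ((g.1 (S.equivFin i) : ℕ+) : ℕ) ≤ u k := by
        apply Finset.filter_congr
        intro i _
        constructor
        · intro hh; exact hh i.2
        · intro hh hi; exact hh
      rw [h2, card_filter_equiv S.equivFin (fun a => ((g.1 a : ℕ+) : ℕ) ≤ u k)]
      exact g.2 k hk
    · intro i hi
      simp only [dif_neg hi]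
      exact (h ⟨i, hi⟩).2
  · intro f
    apply Subtype.ext
    funext i
    by_cases hi : i ∈ S
    · simp only [dif_pos hi]
      have : (⟨i, hi⟩ : {a // a ∈ S}) = S.equivFin.symm (S.equivFin ⟨i, hi⟩) :=
        (Equiv.symm_apply_apply _ _).symm
      exact congrArg Subtype.val this.symm ▸ rfl
    · simp only [dif_neg hi]
  · rintro ⟨g, h⟩
    refine Prod.ext ?_ ?_
    · apply Subtype.ext
      funext k
      simp only
      have hmem := (S.equivFin.symm k).2
      rw [dif_pos hmem]
      have : (⟨(S.equivFin.symm k).1, hmem⟩ : {a // a ∈ S}) = S.equivFin.symm k := by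
        ext; rfl
      rw [this, Equiv.apply_symm_apply]
    · funext i
      apply Subtype.ext
      simp only [dif_neg i.2]
end part3

section part4
open Finset
variable {n : ℕ} {u : ℕ → ℕ} {x : ℕ}

lemma finite_classPred (u : ℕ → ℕ) (x : ℕ) (S : Finset (Fin n)) :
    Finite {f : Fin n → ℕ+ // ClassPred u x S f} := by
  have h1 := finite_park u S.card
  have h2 := finite_pnat_ioc (u (S.card + 1)) x
  exact Finite.of_equiv _ (classEquiv u x S).symm

lemma natCard_classPred (u : ℕ → ℕ) (x : ℕ) (S : Finset (Fin n)) :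
    Nat.card {f : Fin n → ℕ+ // ClassPred u x S f} =
      parkCount u S.card * (x - u (S.card + 1)) ^ (n - S.card) := by
  have h2 := finite_pnat_ioc (u (S.card + 1)) x
  rw [Nat.card_congr (classEquiv u x S), Nat.card_prod, Nat.card_fun]
  congr 1
  rw [natCard_pnat_ioc]
  congr 1
  rw [Nat.card_eq_fintype_card, Fintype.card_subtype_compl]
  simp

lemma natCard_sigma {ι : Type*} [Fintype ι] {α : ι → Type*} [∀ i, Finite (α i)] :
    Nat.card (Σ i, α i) = ∑ i, Nat.card (α i) := by
  letI := fun i => Fintype.ofFinite (α i)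
  simp only [Nat.card_eq_fintype_card]
  exact Fintype.card_sigma

lemma master (hu : Monotone u) (hx : u (n + 1) ≤ x) :
    x ^ n = ∑ j ∈ Finset.range (n + 1),
      n.choose j * (parkCount u j * (x - u (j + 1)) ^ (n - j)) := by
  classical
  have hT : Nat.card {f : Fin n → ℕ+ // ∀ i, (f i : ℕ) ≤ x} = x ^ n := by
    rw [Nat.card_congr (Equiv.subtypePiEquivPi (β := fun _ : Fin n => ℕ+) (p := fun _ v => (v : ℕ) ≤ x))]
    have := finite_pnat_le x
    rw [Nat.card_fun, natCard_pnat_le]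
    simp
  have efib : ∀ S : Finset (Fin n),
      {f : {f : Fin n → ℕ+ // ∀ i, (f i : ℕ) ≤ x} // Sof u f.1 = S} ≃
        {f : Fin n → ℕ+ // ClassPred u x S f} := by
    intro S
    refine Equiv.trans ?_ (Equiv.subtypeEquivRight (fun f => key_iff hu hx S f))
    exact
      ⟨fun f => ⟨f.1.1, f.1.2, f.2⟩, fun f => ⟨⟨f.1, f.2.1⟩, f.2.2⟩,
       fun f => by ext; rfl, fun f => by ext; rfl⟩
  have hfin : ∀ S : Finset (Fin n),
      Finite {f : {f : Fin n → ℕ+ // ∀ i, (f i : ℕ) ≤ x} // Sof u f.1 = S} := by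
    intro S
    have := finite_classPred u x S
    exact Finite.of_equiv _ (efib S).symm
  have hsig :
      Nat.card {f : Fin n → ℕ+ // ∀ i, (f i : ℕ) ≤ x} =
        ∑ S : Finset (Fin n), Nat.card {f : Fin n → ℕ+ // ClassPred u x S f} := by
    rw [← Nat.card_congr (Equiv.sigmaFiberEquiv
      (fun f : {f : Fin n → ℕ+ // ∀ i, (f i : ℕ) ≤ x} => Sof u f.1))]
    haveI := hfin
    rw [natCard_sigma]
    exact Finset.sum_congr rfl fun S _ => Nat.card_congr (efib S)
  rw [← hT, hsig]
  have : ∑ S : Finset (Fin n), Nat.card {f : Fin n → ℕ+ // ClassPred u x S f} =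
      ∑ S : Finset (Fin n), parkCount u S.card * (x - u (S.card + 1)) ^ (n - S.card) :=
    Finset.sum_congr rfl fun S _ => natCard_classPred u x S
  rw [this]
  rw [show (Finset.univ : Finset (Finset (Fin n))) = (Finset.univ : Finset (Fin n)).powerset from
    (Finset.powerset_univ).symm]
  rw [Finset.sum_powerset]
  simp only [Finset.card_univ, Fintype.card_fin]
  refine Finset.sum_congr rfl fun j hj => ?_
  have : ∀ S ∈ Finset.powersetCard j (Finset.univ : Finset (Fin n)),
      parkCount u S.card * (x - u (S.card + 1)) ^ (n - S.card) =
        parkCount u j * (x - u (j + 1)) ^ (n - j) := by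
    intro S hS
    rw [(Finset.mem_powersetCard.mp hS).2]
  rw [Finset.sum_congr rfl this, Finset.sum_const, Finset.card_powersetCard]
  simp [mul_comm, Finset.card_univ]
end part4

section part5
open Finset Polynomial
variable {u : ℕ → ℕ}

lemma master_int (hu : Monotone u) (n : ℕ) (hn : 1 ≤ n) :
    ∑ j ∈ Finset.range (n + 1),
      (n.choose j : ℤ) * (parkCount u j : ℤ) * (-(u (j + 1) : ℤ)) ^ (n - j) = 0 := by
  classical
  set P : Polynomial ℤ :=
    (∑ j ∈ Finset.range (n + 1),
      Polynomial.C ((n.choose j : ℤ) * (parkCount u j : ℤ)) *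
        (Polynomial.X - Polynomial.C ((u (j + 1) : ℤ))) ^ (n - j)) - Polynomial.X ^ n with hP
  have hroot : ∀ m : ℤ, (u (n + 1) : ℤ) ≤ m → P.IsRoot m := by
    intro m hm
    have hm0 : (0 : ℤ) ≤ m := le_trans (by positivity) hm
    have hym : ((m.toNat : ℤ)) = m := Int.toNat_of_nonneg hm0
    set y := m.toNat with hy
    have hxy : u (n + 1) ≤ y := by
      have : ((u (n + 1) : ℤ)) ≤ (y : ℤ) := by rw [hym]; exact hm
      exact_mod_cast this
    have hmaster := master hu hxy
    have hZ : ((y : ℤ)) ^ n = ∑ j ∈ Finset.range (n + 1),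
        (n.choose j : ℤ) * (parkCount u j : ℤ) * ((y : ℤ) - (u (j + 1) : ℤ)) ^ (n - j) := by
      rw [← Nat.cast_pow, hmaster, Nat.cast_sum]
      refine Finset.sum_congr rfl fun j hj => ?_
      rw [Finset.mem_range] at hj
      have hj1 : u (j + 1) ≤ y :=
        le_trans (hu (by omega : j + 1 ≤ n + 1)) hxy
      push_cast [Nat.cast_sub hj1]
      ring
    have heval : P.eval m = 0 := by
      rw [hP]
      simp only [Polynomial.eval_sub, Polynomial.eval_pow, Polynomial.eval_X,
        Polynomial.eval_finset_sum, Polynomial.eval_mul, Polynomial.eval_C]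
      rw [← hym, ← hZ]
      ring
    exact heval
  have hP0 : P = 0 := by
    refine Polynomial.eq_zero_of_infinite_isRoot P ?_
    refine Set.Infinite.mono ?_ (Set.Ici_infinite ((u (n + 1) : ℤ)))
    intro m hm
    exact hroot m hm
  have h0 : P.eval 0 = 0 := by rw [hP0]; simp
  rw [hP] at h0
  simp only [Polynomial.eval_sub, Polynomial.eval_pow, Polynomial.eval_X,
    Polynomial.eval_finset_sum, Polynomial.eval_mul, Polynomial.eval_C] at h0
  rw [zero_pow (by omega : n ≠ 0), sub_zero] at h0
  rw [← h0]
  refine Finset.sum_congr rfl fun j hj => ?_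
  rw [zero_sub]

/-- Kung–Yan recurrence: `𝔣(u;0) = 1` and
`𝔣(u;n) = ∑_{j=1}^n (-1)^{j-1} C(n,j) u(n-j+1)^j 𝔣(u;n-j)`. -/
theorem stmt_3 (u : ℕ → ℕ) (hu : Monotone u) :
    parkCount u 0 = 1 ∧
    ∀ n : ℕ, 1 ≤ n →
      (parkCount u n : ℤ) =
        ∑ j ∈ Finset.Icc 1 n,
          (-1) ^ (j - 1) * (n.choose j : ℤ) * ((u (n - j + 1) : ℤ)) ^ j *
            (parkCount u (n - j) : ℤ) := by
  refine ⟨parkCount_zero u, fun n hn => ?_⟩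
  have h := master_int hu n hn
  rw [Finset.sum_range_succ] at h
  have hlast : (n.choose n : ℤ) * (parkCount u n : ℤ) * (-(u (n + 1) : ℤ)) ^ (n - n) =
      (parkCount u n : ℤ) := by
    simp
  rw [hlast] at h
  have hmain : (parkCount u n : ℤ) = -∑ j ∈ Finset.range n,
      (n.choose j : ℤ) * (parkCount u j : ℤ) * (-(u (j + 1) : ℤ)) ^ (n - j) := by
    linarith
  rw [hmain, ← Finset.sum_neg_distrib]
  refine Finset.sum_bij' (fun j (_ : j ∈ Finset.range n) => n - j)
    (fun j (_ : j ∈ Finset.Icc 1 n) => n - j) ?_ ?_ ?_ ?_ ?_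
  · intro a ha
    rw [Finset.mem_range] at ha
    show n - a ∈ Finset.Icc 1 n
    rw [Finset.mem_Icc]
    omega
  · intro a ha
    rw [Finset.mem_Icc] at ha
    show n - a ∈ Finset.range n
    rw [Finset.mem_range]
    omega
  · intro a ha
    rw [Finset.mem_range] at ha
    show n - (n - a) = a
    omega
  · intro a ha
    rw [Finset.mem_Icc] at ha
    show n - (n - a) = a
    omega
  · intro j hj
    rw [Finset.mem_range] at hj
    have h1 : n - (n - j) = j := by omega
    have h2 : n.choose (n - j) = n.choose j := Nat.choose_symm (by omega)
    rw [h1, h2]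
    have h3 : (-(u (j + 1) : ℤ)) ^ (n - j) = (-1) ^ (n - j) * (u (j + 1) : ℤ) ^ (n - j) := by
      rw [neg_pow]
    have h4 : ((-1 : ℤ)) ^ (n - j) * (-1) = (-1) ^ (n - j - 1) := by
      rw [← pow_succ, show n - j + 1 = (n - j - 1) + 2 by omega, pow_add]
      ring
    rw [h3, ← h4]
    ring
end part5
end

section
/- For the weight u(m) = m (ordinary parking functions), the count from Kung–Yan's recurrence 𝔣(u;n) = Σ_{j=1}^n (-1)^{j-1} C(n,j) (n-j+1)^j 𝔣(u;n-j), 𝔣(u;0)=1, equals (n+1)^{n-1} for all n ≥ 0. -/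
/-- The Kung–Yan sequence `𝔣(u;n)`: `𝔣(u;0)=1` and
`𝔣(u;n) = ∑_{j=1}^n (-1)^{j-1} C(n,j) u(n-j+1)^j 𝔣(u;n-j)`. -/
def fSeq (u : ℕ → ℕ) : ℕ → ℤ
  | 0 => 1
  | n + 1 =>
    ∑ j ∈ (Finset.Icc 1 (n + 1)).attach,
      (-1) ^ ((j : ℕ) - 1) * ((n + 1).choose j : ℤ) *
        (u (n + 1 - (j : ℕ) + 1) : ℤ) ^ (j : ℕ) * fSeq u (n + 1 - (j : ℕ))
decreasing_by have := Finset.mem_Icc.mp j.2; omega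

open Finset fwdDiff

lemma key_diff : ∀ m n : ℕ, m ≤ n →
    (Δ_[1])^[n + 1] (fun x : ℕ => ((x : ℤ) + 1) ^ m) = 0 := by
  intro m
  induction m using Nat.strong_induction_on with
  | _ m IH =>
    intro n hmn
    match m, hmn with
    | 0, _ =>
      have h1 : Δ_[1] (fun x : ℕ => ((x : ℤ) + 1) ^ 0) = 0 := by
        funext x; simp [fwdDiff]
      rw [Function.iterate_succ_apply, h1,
        Function.iterate_fixed (by funext x; simp [fwdDiff]) n]
    | (k + 1), hmn =>
      obtain ⟨p, rfl⟩ : ∃ p, n = p + 1 := ⟨n - 1, by omega⟩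
      have h1 : Δ_[1] (fun x : ℕ => ((x : ℤ) + 1) ^ (k + 1)) =
          ∑ i ∈ range (k + 1), ((k + 1).choose i : ℤ) • fun x : ℕ => ((x : ℤ) + 1) ^ i := by
        funext x
        have hb : ((x : ℤ) + 1 + 1) ^ (k + 1) =
            ∑ i ∈ range (k + 2), ((x : ℤ) + 1) ^ i * 1 ^ (k + 1 - i) * (k + 1).choose i :=
          add_pow _ _ _
        simp only [fwdDiff, Nat.cast_add, Nat.cast_one]
        rw [show ((x : ℤ) + 1 + 1) = ((x : ℤ) + 1 + 1) by ring, hb, Finset.sum_range_succ]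
        simp only [Nat.choose_self, Nat.cast_one, one_pow, mul_one]
        rw [add_sub_cancel_right]
        simp [mul_comm]
      rw [Function.iterate_succ_apply, h1, fwdDiff_iter_finset_sum]
      apply Finset.sum_eq_zero
      intro i hi
      have hi' : i < k + 1 := Finset.mem_range.mp hi
      rw [fwdDiff_iter_const_smul, IH i hi' p (by omega), smul_zero]

lemma key_sum (n : ℕ) :
    ∑ k ∈ range (n + 2), ((-1 : ℤ)) ^ (n + 1 - k) * ((n + 1).choose k : ℤ) *
      ((k : ℤ) + 1) ^ n = 0 := by
  have h := fwdDiff_iter_eq_sum_shift (1 : ℕ) (fun x : ℕ => ((x : ℤ) + 1) ^ n) (n + 1) 0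
  rw [key_diff n n le_rfl] at h
  have h' : (0 : ℤ) = ∑ k ∈ range (n + 2),
      ((-1 : ℤ) ^ (n + 1 - k) * ((n + 1).choose k : ℤ)) • (((k : ℤ) + 1) ^ n) := by
    simpa using h
  rw [h']
  apply Finset.sum_congr rfl
  intro k _
  rw [smul_eq_mul]

lemma key_sum' (n : ℕ) :
    ∑ j ∈ Finset.Icc 1 (n + 1), ((-1 : ℤ)) ^ (j - 1) * ((n + 1).choose j : ℤ) *
      ((n : ℤ) + 2 - j) ^ n = ((n : ℤ) + 2) ^ n := by
  have h := key_sum n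
  rw [Finset.sum_range_succ] at h
  -- last term (k = n+1): (-1)^0 * 1 * (n+2)^n
  have hlast : ((-1 : ℤ)) ^ (n + 1 - (n + 1)) * ((n + 1).choose (n + 1) : ℤ) *
      (((n + 1 : ℕ) : ℤ) + 1) ^ n = ((n : ℤ) + 2) ^ n := by
    simp [Nat.sub_self]; ring_nf
  rw [hlast] at h
  have hmain : ∑ k ∈ range (n + 1), ((-1 : ℤ)) ^ (n + 1 - k) * ((n + 1).choose k : ℤ) *
      ((k : ℤ) + 1) ^ n = -((n : ℤ) + 2) ^ n := by linarith
  -- reindex: j = n + 1 - k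
  have hre : ∑ j ∈ Finset.Icc 1 (n + 1), ((-1 : ℤ)) ^ (j - 1) * ((n + 1).choose j : ℤ) *
      ((n : ℤ) + 2 - j) ^ n
      = ∑ k ∈ range (n + 1), ((-1 : ℤ)) ^ (n - k) * ((n + 1).choose k : ℤ) *
        ((k : ℤ) + 1) ^ n := by
    rw [show Finset.Icc 1 (n + 1) = Finset.image (fun k => n + 1 - k) (range (n + 1)) from ?_]
    · rw [Finset.sum_image ?_]
      · apply Finset.sum_congr rfl
        intro k hk
        have hk' : k < n + 1 := Finset.mem_range.mp hk
        have e1 : n + 1 - k - 1 = n - k := by omega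
        have e2 : (n + 1).choose (n + 1 - k) = (n + 1).choose k :=
          Nat.choose_symm (by omega)
        have e3 : ((n : ℤ) + 2 - (n + 1 - k : ℕ)) = (k : ℤ) + 1 := by
          push_cast [Nat.cast_sub (by omega : k ≤ n + 1)]; ring
        rw [e1, e2, e3]
      · intro a ha b hb hab
        have := Finset.mem_range.mp ha; have := Finset.mem_range.mp hb; simp only at hab; omega
    · ext j
      simp only [Finset.mem_Icc, Finset.mem_image, Finset.mem_range]
      constructor
      · rintro ⟨h1, h2⟩; exact ⟨n + 1 - j, by omega, by omega⟩
      · rintro ⟨k, hk, rfl⟩; omega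
  rw [hre]
  have hsign : ∀ k ∈ range (n + 1), ((-1 : ℤ)) ^ (n - k) * ((n + 1).choose k : ℤ) *
      ((k : ℤ) + 1) ^ n = -(((-1 : ℤ)) ^ (n + 1 - k) * ((n + 1).choose k : ℤ) *
      ((k : ℤ) + 1) ^ n) := by
    intro k hk
    have hk' : k < n + 1 := Finset.mem_range.mp hk
    have : n + 1 - k = (n - k) + 1 := by omega
    rw [this, pow_succ]
    ring
  rw [Finset.sum_congr rfl hsign, Finset.sum_neg_distrib, hmain, neg_neg]

/-- for `u(m) = m`, the Kung–Yan count equals the classical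
number of parking functions, `(n+1)^{n-1}`. -/
theorem stmt_17 : ∀ n : ℕ, fSeq (fun m => m) n = ((n : ℤ) + 1) ^ (n - 1) := by
  intro n
  induction n using Nat.strong_induction_on with
  | _ n IH =>
    match n with
    | 0 => simp [fSeq]
    | (n + 1) =>
      rw [fSeq]
      rw [Finset.sum_attach (Finset.Icc 1 (n + 1)) (fun j =>
        (-1) ^ (j - 1) * ((n + 1).choose j : ℤ) *
          ((n + 1 - j + 1 : ℕ) : ℤ) ^ j * fSeq (fun m => m) (n + 1 - j))]
      have hterm : ∀ j ∈ Finset.Icc 1 (n + 1),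
          (-1 : ℤ) ^ (j - 1) * ((n + 1).choose j : ℤ) *
            ((n + 1 - j + 1 : ℕ) : ℤ) ^ j * fSeq (fun m => m) (n + 1 - j)
          = (-1 : ℤ) ^ (j - 1) * ((n + 1).choose j : ℤ) * ((n : ℤ) + 2 - j) ^ n := by
        intro j hj
        obtain ⟨hj1, hj2⟩ := Finset.mem_Icc.mp hj
        rw [IH (n + 1 - j) (by omega)]
        have hb : ((n + 1 - j + 1 : ℕ) : ℤ) = (n : ℤ) + 2 - j := by
          push_cast [Nat.cast_sub (by omega : j ≤ n + 1)]; ring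
        have hb2 : ((n + 1 - j : ℕ) : ℤ) + 1 = (n : ℤ) + 2 - j := by
          push_cast [Nat.cast_sub (by omega : j ≤ n + 1)]; ring
        rw [hb, hb2]
        rcases Nat.lt_or_ge n j with hcase | hcase
        · -- j = n + 1
          have : j = n + 1 := by omega
          subst this
          have : (n : ℤ) + 2 - (n + 1 : ℕ) = 1 := by push_cast; ring
          rw [this]
          simp
        · have hexp : j + (n + 1 - j - 1) = n := by omega
          rw [mul_assoc, ← pow_add, hexp]
      rw [Finset.sum_congr rfl hterm, key_sum']
      have : (n + 1 : ℕ) - 1 = n := by omega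
      rw [this]
      push_cast
      ring_nf
end
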